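/- arXiv:1306.1788 — 2 statements merged into one kernel-verified Lean document; each statement's English description precedes it below -/
import Mathlib

section
/- Let V, U be finite sets, W = {W_t : t ∈ T}, W' = {W'_s : s ∈ S} partitions of V with |T|=|S|= j ≥ 2, σ : T → S a bijection, f : U × V → ℕ, and ε_t(u) = Σ_{w ∈ W_t} f(u,w) − Σ_{w' ∈ W'_{σ(t)}} f(u,w'). Suppose that for each u ∈ U the row (ε_t(u))_{t∈T} either is identically 0 or takes the value 1 exactly once, the value −1 exactly once, and is 0 elsewhere; suppose moreover that for every t ∈ T there exists u with ε_t(u) = 1 and u' with ε_t(u') = −1. View the relation 'ε_t(u)=1, ε_{t'}(u) = −1 for some u' as a directed edge from t to t' in a graph on T; assume this graph is strongly connected. Then for any fixed t₀ ∈ T, the family of vectors {ε_t : t ∈ T, t ≠ t₀} ⊂ ℤ^U is linearly independent over ℤ. -/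
/-- Any `j-1` of the `j` imbalance vectors `ε_t` are linearly independent over `ℤ`,
given the row structure (each row is zero, or has a single `1` and a single `-1`)
and strong connectivity of the transition graph on `T`. -/
theorem imbalance_vectors_linearIndependent
    {V U T S : Type*} [Fintype V] [Fintype U] [Fintype T] [Fintype S]
    (j : ℕ) (hj : 2 ≤ j) (hT : Fintype.card T = j) (hS : Fintype.card S = j)
    (W : T → Finset V) (W' : S → Finset V)
    (hW : ∀ v : V, ∃! t : T, v ∈ W t)
    (hW' : ∀ v : V, ∃! s : S, v ∈ W' s)
    (σ : T ≃ S) (f : U → V → ℕ)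
    (ε : T → U → ℤ)
    (hε : ∀ t u, ε t u = (∑ w ∈ W t, (f u w : ℤ)) - ∑ w' ∈ W' (σ t), (f u w' : ℤ))
    (hrow : ∀ u : U, (∀ t, ε t u = 0) ∨
      ((∃! t, ε t u = 1) ∧ (∃! t, ε t u = -1) ∧ ∀ t, ε t u = 0 ∨ ε t u = 1 ∨ ε t u = -1))
    (hpos : ∀ t, ∃ u, ε t u = 1) (hneg : ∀ t, ∃ u, ε t u = -1)
    (hconn : ∀ t t' : T, Relation.ReflTransGen (fun a b => ∃ u, ε a u = 1 ∧ ε b u = -1) t t')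
    (t₀ : T) :
    LinearIndependent ℤ (fun t : {t : T // t ≠ t₀} => ε t.1) := by
  classical
  rw [Fintype.linearIndependent_iff]
  intro g hg i
  -- extend g by zero at t₀
  set c : T → ℤ := fun t => if h : t = t₀ then 0 else g ⟨t, h⟩ with hc
  -- pointwise sum is zero
  have hsum : ∀ u : U, ∑ t : T, c t * ε t u = 0 := by
    intro u
    have h1 : (∑ t : {t : T // t ≠ t₀}, g t • ε t.1) u = 0 := by rw [hg]; rfl
    have h2 : ∑ t : {t : T // t ≠ t₀}, g t * ε t.1 u = 0 := by
      simpa [Finset.sum_apply] using h1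
    calc ∑ t : T, c t * ε t u
        = ∑ t ∈ Finset.univ.erase t₀, c t * ε t u := by
          rw [← Finset.sum_erase_add _ _ (Finset.mem_univ t₀)]
          simp [hc]
      _ = ∑ t : {t : T // t ≠ t₀}, c t.1 * ε t.1 u :=
          Finset.sum_subtype _ (fun x => by simp) _
      _ = 0 := by
          rw [← h2]
          refine Finset.sum_congr rfl fun t _ => ?_
          simp [hc, t.2]
  -- c is constant along edges
  have hedge : ∀ a b : T, (∃ u, ε a u = 1 ∧ ε b u = -1) → c a = c b := by
    rintro a b ⟨u, ha, hb⟩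
    rcases hrow u with h0 | ⟨⟨a', ha', hua⟩, ⟨b', hb', hub⟩, hval⟩
    · exact absurd (h0 a) (by rw [ha]; norm_num)
    have haa : a = a' := hua a ha
    have hbb : b = b' := hub b hb
    have hab : a ≠ b := fun h => by rw [h, hb] at ha; norm_num at ha
    have hzero : ∀ t, t ≠ a → t ≠ b → ε t u = 0 := by
      intro t hta htb
      rcases hval t with h | h | h
      · exact h
      · exact absurd (haa ▸ hua t h) hta
      · exact absurd (hbb ▸ hub t h) htb
    have : ∑ t : T, c t * ε t u = ∑ t ∈ ({a, b} : Finset T), c t * ε t u := by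
      refine (Finset.sum_subset (Finset.subset_univ _) fun t _ ht => ?_).symm
      simp only [Finset.mem_insert, Finset.mem_singleton, not_or] at ht
      rw [hzero t ht.1 ht.2, mul_zero]
    rw [hsum u, Finset.sum_pair hab, ha, hb] at this
    linarith
  -- c is constant via reflexive-transitive closure
  have hconst : ∀ t : T, c t = c t₀ := by
    intro t
    induction hconn t₀ t with
    | refl => rfl
    | tail _ hbc ih => rw [← ih]; exact (hedge _ _ hbc).symm
  have := hconst i.1
  simpa [hc, i.2] using this
end

section
/- Let V_n, V_{n+1} be finite sets and f : V_{n+1} × V_n → ℕ an incidence matrix. Let W = {W_t}_{t∈T}, W' = {W'_s}_{s∈S} be partitions of V_n with a map σ : T → 𝒫(S), and for each u ∈ V_{n+1} let m(u) ∈ V_n, M(u) ∈ V_n be designated elements (sources of minimal and maximal edges) with m(u) in some block W'_{s₀(u)} and M(u) in some block W_{t₁(u)}. Define modified entries f̃(u,w) = f(u,w) − [w = M(u)] and f̄(u,w) = f(u,w) − [w = m(u)]. Suppose a word w₁w₂⋯w_p over V_n enumerates the multiset {w with multiplicity f(u,w)}, with w₁ = m(u), w_p = M(u), and with the property that for each consecutive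 pair w_i w_{i+1}, if w_i ∈ W_t then w_{i+1} ∈ W'_s for some s ∈ σ(t). Then for each s ∈ S: Σ_{t : s ∈ σ(t)} (number of indices i < p with w_i ∈ W_t and w_{i+1} ∈ W'_s) = Σ_{w' ∈ W'_s} f̄(u,w'), and for each t ∈ T: Σ_{s ∈ σ(t)} (number of indices i < p with w_i ∈ W_t and w_{i+1} ∈ W'_s) = Σ_{w ∈ W_t} f̃(u,w). -/
private lemma chain'_zip_tail {α : Type*} {R : α → α → Prop} :
    ∀ {l : List α}, l.Chain' R → ∀ p ∈ l.zip l.tail, R p.1 p.2 := by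
  intro l
  induction l with
  | nil => intro _ p hp; simp at hp
  | cons a l ih =>
    cases l with
    | nil => intro _ p hp; simp at hp
    | cons b l =>
      intro h p hp
      rw [show List.Chain' R (a :: b :: l) ↔ _ from List.isChain_cons_cons] at h
      simp only [List.tail_cons, List.zip_cons_cons, List.mem_cons] at hp
      rcases hp with rfl | hp
      · exact h.1
      · exact ih h.2 p hp

private lemma map_fst_zip_tail {α : Type*} : ∀ (l : List α),
    (l.zip l.tail).map Prod.fst = l.dropLast
  | [] => rfl
  | [_] => rfl
  | a :: b :: l => by
    simp only [List.tail_cons, List.zip_cons_cons, List.map_cons]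
    rw [show (b::l).zip l = (b::l).zip (b::l).tail from rfl, map_fst_zip_tail (b::l)]
    rfl

private lemma map_snd_zip_tail {α : Type*} (l : List α) :
    (l.zip l.tail).map Prod.snd = l.tail :=
  List.map_snd_zip (by cases l <;> simp)

private lemma sum_count_eq_countP {α : Type*} [DecidableEq α] (F : Finset α) :
    ∀ (l : List α), ∑ v ∈ F, l.count v = l.countP (fun a => decide (a ∈ F))
  | [] => by simp
  | a :: l => by
    simp only [List.count_cons, List.countP_cons, Finset.sum_add_distrib,
      sum_count_eq_countP F l, decide_eq_true_eq]
    congr 1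
    simp [Finset.sum_ite_eq' F a (fun _ => 1)]

private lemma sum_countP {α β : Type*} [DecidableEq β] (F : Finset β) (g : α → β)
    (q : α → Prop) [DecidablePred q] :
    ∀ (l : List α), (∀ p ∈ l, q p → g p ∈ F) →
      ∑ b ∈ F, l.countP (fun p => decide (g p = b ∧ q p)) =
        l.countP (fun p => decide (q p))
  | [], _ => by simp
  | a :: l, h => by
    simp only [List.countP_cons, Finset.sum_add_distrib, decide_eq_true_eq]
    rw [sum_countP F g q l (fun p hp => h p (List.mem_cons_of_mem a hp))]
    congr 1
    by_cases hq : q a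
    · simp only [hq, and_true, if_pos]
      rw [Finset.sum_ite_eq F (g a) (fun _ => 1)]
      simp [h a List.mem_cons_self hq]
    · simp [hq]

/-- Necessity of the balance relations: if a word `w` over `V_n` enumerates the edges
into `u` (with multiplicities `f u ·`), starts at the minimal source `mE u`, ends at the
maximal source `ME u`, and every transition from a block `W_t` lands in a block `W'_s`
with `s ∈ σ t`, then counting transitions yields the balance relations among the
modified incidence entries. -/
theorem balance_relations_of_ordered_word
    {Vn Vn1 T S : Type*} [Fintype Vn] [DecidableEq Vn]
    [Fintype T] [DecidableEq T] [Fintype S] [DecidableEq S]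
    (f : Vn1 → Vn → ℕ)
    (τ : Vn → T) (ς : Vn → S) (σ : T → Finset S)
    (mE ME : Vn1 → Vn)
    (ftil fbar : Vn1 → Vn → ℕ)
    (hftil : ∀ u w, ftil u w = f u w - (if w = ME u then 1 else 0))
    (hfbar : ∀ u w, fbar u w = f u w - (if w = mE u then 1 else 0))
    (u : Vn1) (w : List Vn)
    (hcount : ∀ v : Vn, w.count v = f u v)
    (hhead : w.head? = some (mE u)) (hlast : w.getLast? = some (ME u))
    (hchain : List.Chain' (fun a b => ς b ∈ σ (τ a)) w) :
    (∀ s : S, ∑ t ∈ Finset.univ.filter (fun t => s ∈ σ t),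
        (w.zip w.tail).countP (fun p => decide (τ p.1 = t ∧ ς p.2 = s))
      = ∑ v ∈ Finset.univ.filter (fun v => ς v = s), fbar u v) ∧
    (∀ t : T, ∑ s ∈ σ t,
        (w.zip w.tail).countP (fun p => decide (τ p.1 = t ∧ ς p.2 = s))
      = ∑ v ∈ Finset.univ.filter (fun v => τ v = t), ftil u v) := by
  have hne : w ≠ [] := by
    intro h; rw [h] at hhead; simp at hhead
  have hmem := chain'_zip_tail hchain
  -- counting values in tail / dropLast
  have hcount_tail : ∀ v, w.tail.count v = fbar u v := by
    intro v
    obtain ⟨a, l, rfl⟩ : ∃ a l, w = a :: l := by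
      cases w with
      | nil => exact absurd rfl hne
      | cons a l => exact ⟨a, l, rfl⟩
    have ha : a = mE u := by simpa using hhead
    have hc := hcount v
    rw [List.count_cons] at hc
    simp only [beq_iff_eq] at hc
    rw [hfbar]
    subst ha
    rw [List.tail_cons]
    have hsw : (if mE u = v then (1:ℕ) else 0) = (if v = mE u then 1 else 0) := by
      by_cases h : v = mE u
      · simp [h]
      · rw [if_neg h, if_neg (fun hh => h hh.symm)]
    omega
  have hcount_dropLast : ∀ v, w.dropLast.count v = ftil u v := by
    intro v
    have hsplit : w.dropLast ++ [w.getLast hne] = w := List.dropLast_append_getLast hne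
    have hME : w.getLast hne = ME u := by
      rw [List.getLast?_eq_getLast hne] at hlast
      simpa using hlast
    have := hcount v
    conv at this => rw [← hsplit]
    rw [List.count_append, hME] at this
    rw [hftil]
    have hsing : List.count v [ME u] = if v = ME u then 1 else 0 := by
      by_cases h : v = ME u <;> simp [h, List.count_singleton] <;> exact fun hh => h hh.symm
    omega
  constructor
  · intro s
    rw [sum_countP (Finset.univ.filter (fun t => s ∈ σ t)) (fun p => τ p.1)
      (fun p => ς p.2 = s) (w.zip w.tail)
      (fun p hp hq => by simpa [Finset.mem_filter] using hq ▸ hmem p hp)]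
    rw [show (fun p : Vn × Vn => decide (ς p.2 = s))
        = ((fun v => decide (ς v = s)) ∘ Prod.snd) from rfl,
      ← List.countP_map, map_snd_zip_tail,
      Finset.sum_congr rfl (fun v _ => (hcount_tail v).symm), sum_count_eq_countP]
    apply List.countP_congr
    intro a _
    simp
  · intro t
    have hstep : ∑ s ∈ σ t,
        (w.zip w.tail).countP (fun p => decide (τ p.1 = t ∧ ς p.2 = s))
        = ∑ s ∈ σ t,
        (w.zip w.tail).countP (fun p => decide (ς p.2 = s ∧ τ p.1 = t)) := by
      refine Finset.sum_congr rfl fun s _ => ?_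
      apply List.countP_congr
      intro p _
      simp [and_comm]
    rw [hstep, sum_countP (σ t) (fun p => ς p.2) (fun p => τ p.1 = t) (w.zip w.tail)
      (fun p hp hq => hq ▸ hmem p hp)]
    rw [show (fun p : Vn × Vn => decide (τ p.1 = t))
        = ((fun v => decide (τ v = t)) ∘ Prod.fst) from rfl,
      ← List.countP_map, map_fst_zip_tail,
      Finset.sum_congr rfl (fun v _ => (hcount_dropLast v).symm), sum_count_eq_countP]
    apply List.countP_congr
    intro a _
    simp
end
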